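/- Let α, v*, s* > 0 and M₁ ∈ ℝ, and set t₂ = t₁ + log((2v* + |M₁|s*)/(v* + |M₁|s*))/(2αv*). Suppose s : [t₁, t₂] → ℝ is differentiable with s(t) > 0 on [t₁, t₂], s(t₁) = s*/2, and s'(t) ≤ 2αv*·s(t) + 2α|M₁|·s(t)² for all t ∈ [t₁, t₂]. Then for every t ∈ [t₁, t₂], s(t) ≤ v*s*/((2v* + |M₁|s*)·exp(−2αv*(t − t₁)) − |M₁|s*); in particular s(t) ≤ s* for all t ∈ [t₁, t₂]. -/

import Mathlib

/-- Upper bound on `s` from the differential inequality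
`s' ≤ 2αv*s + 2α|M₁|s²` with `s(t₁) = s*/2`, up to the explicit time `t₂`. -/
theorem s_upper_bound
    (α vs ss M₁ t₁ : ℝ) (hα : 0 < α) (hvs : 0 < vs) (hss : 0 < ss)
    (t₂ : ℝ)
    (ht₂ : t₂ = t₁ + Real.log ((2 * vs + |M₁| * ss) / (vs + |M₁| * ss)) / (2 * α * vs))
    (s ds : ℝ → ℝ)
    (hderiv : ∀ t ∈ Set.Icc t₁ t₂, HasDerivAt s (ds t) t)
    (hpos : ∀ t ∈ Set.Icc t₁ t₂, 0 < s t)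
    (hinit : s t₁ = ss / 2)
    (hineq : ∀ t ∈ Set.Icc t₁ t₂, ds t ≤ 2 * α * vs * s t + 2 * α * |M₁| * s t ^ 2) :
    ∀ t ∈ Set.Icc t₁ t₂,
      s t ≤ vs * ss /
          ((2 * vs + |M₁| * ss) * Real.exp (-(2 * α * vs) * (t - t₁)) - |M₁| * ss) ∧
      s t ≤ ss := by
  intro t ht
  set c : ℝ := 2 * α * vs with hc
  set m : ℝ := |M₁| with hm
  have hc0 : 0 < c := by positivity
  have hm0 : 0 ≤ m := abs_nonneg _
  -- auxiliary function
  set w : ℝ → ℝ := fun t => Real.exp (c * (t - t₁)) * ((s t)⁻¹ + m / vs) with hw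
  -- derivative of w
  have hwderiv : ∀ x ∈ Set.Icc t₁ t₂, HasDerivAt w
      (Real.exp (c * (x - t₁)) * (c * ((s x)⁻¹ + m / vs) + (-ds x / s x ^ 2))) x := by
    intro x hx
    have hsne : s x ≠ 0 := (hpos x hx).ne'
    have h1 : HasDerivAt (fun y => Real.exp (c * (y - t₁))) (Real.exp (c * (x - t₁)) * c) x := by
      have := (((hasDerivAt_id x).sub_const t₁).const_mul c).exp
      simpa using this
    have h2 : HasDerivAt (fun y => (s y)⁻¹ + m / vs) (-ds x / s x ^ 2) x :=
      ((hderiv x hx).inv hsne).add_const _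
    have := h1.mul h2
    exact this.congr_deriv (by ring)
  -- derivative is nonnegative
  have hwnonneg : ∀ x ∈ Set.Icc t₁ t₂,
      0 ≤ Real.exp (c * (x - t₁)) * (c * ((s x)⁻¹ + m / vs) + (-ds x / s x ^ 2)) := by
    intro x hx
    have hsx := hpos x hx
    have hE : 0 < Real.exp (c * (x - t₁)) := Real.exp_pos _
    have hi := hineq x hx
    have heq : c * ((s x)⁻¹ + m / vs) + (-ds x / s x ^ 2)
        = (c * s x + 2 * α * m * s x ^ 2 - ds x) / s x ^ 2 := by
      rw [hc]
      field_simp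
      ring
    have : 0 ≤ c * ((s x)⁻¹ + m / vs) + (-ds x / s x ^ 2) := by
      rw [heq]
      apply div_nonneg _ (by positivity)
      rw [hc] at hi ⊢
      linarith
    positivity
  -- w is monotone on Icc t₁ t₂
  have hmono : MonotoneOn w (Set.Icc t₁ t₂) := by
    apply monotoneOn_of_deriv_nonneg (convex_Icc t₁ t₂)
    · exact fun x hx => (hwderiv x hx).continuousAt.continuousWithinAt
    · intro x hx
      rw [interior_Icc] at hx
      exact (hwderiv x (Set.mem_Icc_of_Ioo hx)).differentiableAt.differentiableWithinAt
    · intro x hx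
      rw [interior_Icc] at hx
      rw [(hwderiv x (Set.mem_Icc_of_Ioo hx)).deriv]
      exact hwnonneg x (Set.mem_Icc_of_Ioo hx)
  have ht₁ : t₁ ∈ Set.Icc t₁ t₂ := ⟨le_refl _, le_trans ht.1 ht.2⟩
  have hwle : w t₁ ≤ w t := hmono ht₁ ht ht.1
  -- unfold w t₁
  have hwt₁ : w t₁ = 2 / ss + m / vs := by
    simp [hw, hinit]
  set E : ℝ := Real.exp (c * (t - t₁)) with hE
  have hE0 : 0 < E := Real.exp_pos _
  have hEneg : Real.exp (-(2 * α * vs) * (t - t₁)) = E⁻¹ := by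
    rw [hE, ← Real.exp_neg, hc]
    ring_nf
  -- lower bound on E⁻¹
  have hr0 : (0:ℝ) < (2 * vs + m * ss) / (vs + m * ss) := by positivity
  have hEt₂ : (vs + m * ss) / (2 * vs + m * ss) ≤ E⁻¹ := by
    have h1 : c * (t - t₁) ≤ c * (t₂ - t₁) :=
      mul_le_mul_of_nonneg_left (by linarith [ht.2]) hc0.le
    have h2 : E ≤ Real.exp (c * (t₂ - t₁)) := Real.exp_le_exp.mpr h1
    have h3 : Real.exp (c * (t₂ - t₁)) = (2 * vs + m * ss) / (vs + m * ss) := by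
      rw [ht₂]
      have : c * (t₁ + Real.log ((2 * vs + m * ss) / (vs + m * ss)) / c - t₁)
          = Real.log ((2 * vs + m * ss) / (vs + m * ss)) := by
        field_simp
        ring
      rw [this, Real.exp_log hr0]
    rw [h3] at h2
    have h4 : ((2 * vs + m * ss) / (vs + m * ss))⁻¹ ≤ E⁻¹ := by
      gcongr
    rw [inv_div] at h4
    exact h4
  -- denominator
  set D : ℝ := (2 * vs + m * ss) * E⁻¹ - m * ss with hD
  have hDvs : vs ≤ D := by
    have : (2 * vs + m * ss) * ((vs + m * ss) / (2 * vs + m * ss)) ≤ (2 * vs + m * ss) * E⁻¹ :=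
      mul_le_mul_of_nonneg_left hEt₂ (by positivity)
    have heq : (2 * vs + m * ss) * ((vs + m * ss) / (2 * vs + m * ss)) = vs + m * ss := by
      field_simp
    rw [heq] at this
    simp only [hD]
    linarith
  have hD0 : 0 < D := lt_of_lt_of_le hvs hDvs
  have hst : 0 < s t := hpos t ht
  -- main inequality : D * s t ≤ vs * ss
  have hkey : D * s t ≤ vs * ss := by
    have h1 : 2 / ss + m / vs ≤ E * ((s t)⁻¹ + m / vs) := by
      rw [hwt₁] at hwle
      exact hwle
    have h2 : E⁻¹ * (2 / ss + m / vs) ≤ (s t)⁻¹ + m / vs := by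
      rw [← mul_le_mul_iff_right₀ hE0]
      calc E * (E⁻¹ * (2 / ss + m / vs)) = (2 / ss + m / vs) := by
            field_simp
        _ ≤ E * ((s t)⁻¹ + m / vs) := h1
    have h3 : E⁻¹ * (2 / ss + m / vs) * (vs * ss * s t) ≤ ((s t)⁻¹ + m / vs) * (vs * ss * s t) :=
      mul_le_mul_of_nonneg_right h2 (by positivity)
    have h4 : E⁻¹ * (2 / ss + m / vs) * (vs * ss * s t) = (2 * vs + m * ss) * E⁻¹ * s t := by
      field_simp
    have h5 : ((s t)⁻¹ + m / vs) * (vs * ss * s t) = vs * ss + m * ss * s t := by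
      field_simp
    rw [h4, h5] at h3
    rw [hD]
    nlinarith [h3]
  have hfirst : s t ≤ vs * ss / D := by
    rw [le_div_iff₀ hD0]
    nlinarith [hkey]
  constructor
  · rw [hEneg]
    exact hfirst
  · calc s t ≤ vs * ss / D := hfirst
      _ ≤ vs * ss / vs := by
          apply div_le_div_of_nonneg_left (by positivity) hvs hDvs
      _ = ss := by field_simp
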